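/- Let X ∈ U(n, q^s) be a balanced lattice design with n ≥ 2, s ≥ 2, such that q(n−1) divides s(n−q). Then A_2(X) ≥ s(q−1)(qs − s − n + 1)/(2(n−1)). -/

import Mathlib

open Finset

/-- A design `X ∈ U(n, q^s)` is balanced: `q ∣ n` and every level occurs exactly
`n / q` times in each column. -/
def IsBalanced {n s q : ℕ} (X : Fin n → Fin s → Fin q) : Prop :=
  q ∣ n ∧ ∀ (j : Fin s) (ℓ : Fin q),
    (univ.filter fun i => X i j = ℓ).card = n / q

/-- The contrast χ_v(X) = ∑_i ∏_j ω^{v_j x_{ij}}, with ω = exp(2πi/q). -/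
noncomputable def contrast {n s q : ℕ} (X : Fin n → Fin s → Fin q)
    (v : Fin s → Fin q) : ℂ :=
  ∑ i, ∏ j, Complex.exp (2 * (Real.pi : ℂ) * Complex.I / (q : ℂ)) ^ ((v j : ℕ) * (X i j : ℕ))

/-- The weight wt(v) = #{j : v_j ≠ 0}. -/
def wt {s q : ℕ} (v : Fin s → Fin q) : ℕ :=
  (univ.filter fun j => (v j : ℕ) ≠ 0).card

/-- The generalized word-length pattern A_k(X) = n⁻² ∑_{wt(v)=k} |χ_v(X)|². -/
noncomputable def wlp {n s q : ℕ} (X : Fin n → Fin s → Fin q) (k : ℕ) : ℝ :=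
  (∑ v ∈ univ.filter (fun v : Fin s → Fin q => wt v = k),
    ‖contrast X v‖ ^ 2) / (n : ℝ) ^ 2


noncomputable def om (q : ℕ) : ℂ := Complex.exp (2 * (Real.pi : ℂ) * Complex.I / (q : ℂ))

lemma om_pow (q k : ℕ) : om q ^ k = Complex.exp (2 * (Real.pi : ℂ) * Complex.I * k / (q : ℂ)) := by
  rw [om, ← Complex.exp_nat_mul]; ring_nf

lemma om_pow_q (q : ℕ) (hq : q ≠ 0) : om q ^ q = 1 := by
  rw [om_pow q q]
  have : (2 * (Real.pi : ℂ) * Complex.I * q / q) = 2 * Real.pi * Complex.I := by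
    have : (q:ℂ) ≠ 0 := by exact_mod_cast hq
    field_simp
  rw [this]
  simpa using Complex.exp_int_mul_two_pi_mul_I 1

lemma om_pow_ne_one (q k : ℕ) (h0 : k ≠ 0) (hk : k < q) : om q ^ k ≠ 1 := by
  have hq : q ≠ 0 := by omega
  rw [om_pow q k]
  intro h
  rw [Complex.exp_eq_one_iff] at h
  obtain ⟨m, hm⟩ := h
  have hπ : (2 * (Real.pi:ℂ) * Complex.I) ≠ 0 := by
    simp [Real.pi_ne_zero, Complex.I_ne_zero]
  have hqc : (q:ℂ) ≠ 0 := by exact_mod_cast hq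
  have hc : (k : ℂ) = m * q := by
    field_simp at hm
    linear_combination hm
  have hz : (k : ℤ) = m * q := by exact_mod_cast hc
  have hkq : (k:ℤ) < q := by exact_mod_cast hk
  have hk0 : (0:ℤ) < k := by exact_mod_cast Nat.pos_of_ne_zero h0
  have hq0 : (0:ℤ) < q := by exact_mod_cast Nat.pos_of_ne_zero hq
  rcases lt_trichotomy m 0 with h|h|h
  · nlinarith
  · simp [h] at hz; omega
  · nlinarith

lemma geom_zero (q : ℕ) (z : ℂ) (h1 : z ≠ 1) (hq : z ^ q = 1) :
    ∑ a : Fin q, z ^ (a : ℕ) = 0 := by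
  rw [Fin.sum_univ_eq_sum_range, geom_sum_eq h1, hq]
  simp

lemma om_ne_zero (q : ℕ) : om q ≠ 0 := Complex.exp_ne_zero _

lemma conj_om (q : ℕ) : (starRingEnd ℂ) (om q) = (om q)⁻¹ := by
  rw [om, ← Complex.exp_conj, ← Complex.exp_neg]
  congr 1
  simp [map_div₀, Complex.conj_I, map_ofNat]
  ring

lemma om_pow_inj (q : ℕ) (d1 d2 : ℕ) (h1 : d1 < q) (h2 : d2 < q)
    (h : om q ^ d1 = om q ^ d2) : d1 = d2 := by
  by_contra hne
  rcases Nat.lt_or_ge d1 d2 with hlt | hge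
  · have : om q ^ d1 * om q ^ (d2 - d1) = om q ^ d1 * 1 := by
      rw [← pow_add, mul_one]
      rw [h]; congr 1; omega
    have := mul_left_cancel₀ (pow_ne_zero d1 (om_ne_zero q)) this
    exact om_pow_ne_one q (d2 - d1) (by omega) (by omega) this
  · have hlt : d2 < d1 := by omega
    have : om q ^ d2 * om q ^ (d1 - d2) = om q ^ d2 * 1 := by
      rw [← pow_add, mul_one, ← h]; congr 1; omega
    have := mul_left_cancel₀ (pow_ne_zero d2 (om_ne_zero q)) this
    exact om_pow_ne_one q (d1 - d2) (by omega) (by omega) this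

/-- Column orthogonality -/
lemma col_orth (q : ℕ) (hq : q ≠ 0) (d1 d2 : Fin q) :
    ∑ a : Fin q, om q ^ ((a : ℕ) * (d1 : ℕ)) * (starRingEnd ℂ) (om q ^ ((a : ℕ) * (d2 : ℕ)))
      = if d1 = d2 then (q : ℂ) else 0 := by
  set z : ℂ := om q ^ (d1 : ℕ) * ((om q)⁻¹) ^ (d2 : ℕ) with hz
  have hterm : ∀ a : Fin q,
      om q ^ ((a : ℕ) * (d1 : ℕ)) * (starRingEnd ℂ) (om q ^ ((a : ℕ) * (d2 : ℕ))) = z ^ (a : ℕ) := by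
    intro a
    rw [map_pow, conj_om, hz, mul_pow, ← pow_mul, ← pow_mul, mul_comm (d1:ℕ) (a:ℕ), mul_comm (d2:ℕ) (a:ℕ)]
  rw [Finset.sum_congr rfl (fun a _ => hterm a)]
  by_cases h : d1 = d2
  · subst h
    have : z = 1 := by
      rw [hz, inv_pow, mul_inv_cancel₀ (pow_ne_zero _ (om_ne_zero q))]
    simp [this]
  · rw [geom_zero q z ?_ ?_]
    · simp [h]
    · intro hz1
      apply h
      have : om q ^ (d1 : ℕ) = om q ^ (d2 : ℕ) := by
        have h2 : om q ^ (d2:ℕ) ≠ 0 := pow_ne_zero _ (om_ne_zero q)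
        rw [hz, inv_pow, mul_inv_eq_one₀ h2] at hz1
        exact hz1
      exact Fin.ext (om_pow_inj q _ _ d1.isLt d2.isLt this)
    · have hzq : z ^ q = (om q ^ q) ^ (d1:ℕ) * ((om q ^ q)⁻¹) ^ (d2:ℕ) := by
        rw [hz]; ring
      rw [hzq, om_pow_q q hq]; simp


open Complex

lemma contrast_om {n s q : ℕ} (X : Fin n → Fin s → Fin q) (v : Fin s → Fin q) :
    contrast X v = ∑ i, ∏ j, om q ^ ((v j : ℕ) * (X i j : ℕ)) := rfl

/-- contrast of the all-zero vector is n -/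
lemma contrast_zero {n s q : ℕ} (X : Fin n → Fin s → Fin q) (v : Fin s → Fin q)
    (hv : ∀ k, (v k : ℕ) = 0) : contrast X v = n := by
  rw [contrast_om]
  have : ∀ i : Fin n, ∏ j, om q ^ ((v j : ℕ) * (X i j : ℕ)) = 1 := by
    intro i; apply Finset.prod_eq_one; intro j _; rw [hv j]; simp
  rw [Finset.sum_congr rfl (fun i _ => this i)]
  simp

/-- contrast of a weight-one vector vanishes for a balanced design -/
lemma contrast_single {n s q : ℕ} (hq : q ≠ 0) (X : Fin n → Fin s → Fin q)
    (hX : IsBalanced X) (j : Fin s) (v : Fin s → Fin q)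
    (hvj : (v j : ℕ) ≠ 0) (hv : ∀ k, k ≠ j → (v k : ℕ) = 0) : contrast X v = 0 := by
  rw [contrast_om]
  have h1 : ∀ i : Fin n, ∏ k, om q ^ ((v k : ℕ) * (X i k : ℕ))
      = om q ^ ((v j : ℕ) * (X i j : ℕ)) := by
    intro i
    apply Finset.prod_eq_single_of_mem j (mem_univ j)
    intro k _ hk; rw [hv k hk]; simp
  rw [Finset.sum_congr rfl (fun i _ => h1 i)]
  rw [← Finset.sum_fiberwise' univ (fun i => X i j) (fun ℓ => om q ^ ((v j : ℕ) * (ℓ : ℕ)))]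
  have h2 : ∀ ℓ : Fin q, ∑ _i ∈ univ.filter (fun i => X i j = ℓ),
      om q ^ ((v j : ℕ) * (ℓ : ℕ)) = (n / q : ℕ) * om q ^ ((v j : ℕ) * (ℓ : ℕ)) := by
    intro ℓ
    rw [Finset.sum_const, hX.2 j ℓ, nsmul_eq_mul]
  rw [Finset.sum_congr rfl (fun ℓ _ => h2 ℓ), ← Finset.mul_sum]
  have h3 : ∑ ℓ : Fin q, om q ^ ((v j : ℕ) * (ℓ : ℕ)) = 0 := by
    have : ∀ ℓ : Fin q, om q ^ ((v j : ℕ) * (ℓ : ℕ)) = (om q ^ (v j : ℕ)) ^ (ℓ : ℕ) := by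
      intro ℓ; rw [← pow_mul]
    rw [Finset.sum_congr rfl (fun ℓ _ => this ℓ)]
    apply geom_zero
    · exact om_pow_ne_one q _ hvj (v j).isLt
    · rw [← pow_mul, mul_comm, pow_mul, om_pow_q q hq, one_pow]
  rw [h3, mul_zero]

section Main
variable {n s q : ℕ} [NeZero q]

def T1 (s q : ℕ) [NeZero q] : Finset (Fin s × Fin q) :=
  univ ×ˢ (univ.filter fun a : Fin q => a ≠ 0)

noncomputable def gg (X : Fin n → Fin s → Fin q) (i : Fin n) (p : Fin s × Fin q) : ℂ :=
  om q ^ ((p.2 : ℕ) * (X i p.1 : ℕ))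

def vv (p p' : Fin s × Fin q) : Fin s → Fin q :=
  fun k => (if k = p.1 then p.2 else 0) + (if k = p'.1 then p'.2 else 0)

noncomputable def mm (X : Fin n → Fin s → Fin q) (i i' : Fin n) : ℝ :=
  ∑ j, ((q : ℝ) * (if X i j = X i' j then 1 else 0) - 1)

lemma T1_card : (T1 s q).card = s * (q - 1) := by
  rw [T1, Finset.card_product, Finset.filter_ne', Finset.card_erase_of_mem (mem_univ _)]
  simp [Fintype.card_fin]

lemma M1 (X : Fin n → Fin s → Fin q) (i i' : Fin n) :
    ((mm X i i' : ℝ) : ℂ) = ∑ p ∈ T1 s q, gg X i p * (starRingEnd ℂ) (gg X i' p) := by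
  rw [T1, Finset.sum_product, mm]
  push_cast
  apply Finset.sum_congr rfl
  intro j _
  have key := col_orth q (NeZero.ne q) (X i j) (X i' j)
  have hsplit := Finset.sum_filter_add_sum_filter_not (univ : Finset (Fin q))
    (fun a : Fin q => a ≠ 0)
    (fun a : Fin q => om q ^ ((a : ℕ) * (X i j : ℕ)) * (starRingEnd ℂ) (om q ^ ((a : ℕ) * (X i' j : ℕ))))
  have hzero : (univ.filter fun a : Fin q => ¬ a ≠ 0) = {(0 : Fin q)} := by
    ext a; simp
  rw [hzero, Finset.sum_singleton] at hsplit
  simp only [Fin.val_zero, zero_mul, pow_zero, map_one, mul_one] at hsplit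
  have : ∑ a ∈ univ.filter (fun a : Fin q => a ≠ 0),
      gg X i (j, a) * (starRingEnd ℂ) (gg X i' (j, a))
      = (if X i j = X i' j then (q:ℂ) else 0) - 1 := by
    rw [← key, ← hsplit]; simp [gg]
  rw [this]
  by_cases h : X i j = X i' j <;> simp [h]

lemma om_pow_mod (q : ℕ) (hq : q ≠ 0) (a : ℕ) : om q ^ a = om q ^ (a % q) :=
  pow_eq_pow_mod a (om_pow_q q hq)

/-- The contrast at `vv p p'` splits as a product of two column characters. -/
lemma M3 (X : Fin n → Fin s → Fin q) (p p' : Fin s × Fin q) :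
    contrast X (vv p p') = ∑ i, gg X i p * gg X i p' := by
  rw [contrast_om]
  apply Finset.sum_congr rfl
  intro i _
  have hq := NeZero.ne q
  have step1 : ∀ k : Fin s, om q ^ (((vv p p') k : ℕ) * (X i k : ℕ))
      = om q ^ (((if k = p.1 then (p.2:ℕ) else 0) + (if k = p'.1 then (p'.2:ℕ) else 0)) * (X i k : ℕ)) := by
    intro k
    have hval : ((vv p p') k : ℕ) = ((if k = p.1 then (p.2:ℕ) else 0) + (if k = p'.1 then (p'.2:ℕ) else 0)) % q := by
      rw [vv]
      rw [Fin.val_add]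
      simp [apply_ite (Fin.val : Fin q → ℕ)]
    rw [hval, om_pow_mod q hq, Nat.mod_mul_mod, ← om_pow_mod q hq]
  rw [Finset.prod_congr rfl (fun k _ => step1 k)]
  have step2 : ∀ k : Fin s, om q ^ (((if k = p.1 then (p.2:ℕ) else 0) + (if k = p'.1 then (p'.2:ℕ) else 0)) * (X i k : ℕ))
      = om q ^ ((if k = p.1 then (p.2:ℕ) else 0) * (X i k : ℕ)) * om q ^ ((if k = p'.1 then (p'.2:ℕ) else 0) * (X i k : ℕ)) := by
    intro k; rw [← pow_add, add_mul]
  rw [Finset.prod_congr rfl (fun k _ => step2 k), Finset.prod_mul_distrib]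
  congr 1
  · rw [gg, Finset.prod_eq_single_of_mem p.1 (mem_univ _) (fun k _ hk => by simp [hk])]
    simp
  · rw [gg, Finset.prod_eq_single_of_mem p'.1 (mem_univ _) (fun k _ hk => by simp [hk])]
    simp

lemma M2 (X : Fin n → Fin s → Fin q) :
    ∑ p ∈ T1 s q, ∑ p' ∈ T1 s q, (‖contrast X (vv p p')‖)^2
      = ∑ i : Fin n, ∑ i' : Fin n, (mm X i i')^2 := by
  have hC : ((∑ p ∈ T1 s q, ∑ p' ∈ T1 s q, (‖contrast X (vv p p')‖)^2 : ℝ) : ℂ)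
      = ((∑ i : Fin n, ∑ i' : Fin n, (mm X i i')^2 : ℝ) : ℂ) := by
    push_cast
    have habs : ∀ p p', ((‖contrast X (vv p p')‖ : ℝ) : ℂ)^2
        = contrast X (vv p p') * (starRingEnd ℂ) (contrast X (vv p p')) := by
      intro p p'
      rw [Complex.mul_conj]
      norm_cast
      rw [Complex.sq_norm]
    calc ∑ p ∈ T1 s q, ∑ p' ∈ T1 s q, ((‖contrast X (vv p p')‖ : ℝ) : ℂ)^2
        = ∑ p ∈ T1 s q, ∑ p' ∈ T1 s q, ∑ i : Fin n, ∑ i' : Fin n,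
            (gg X i p * (starRingEnd ℂ) (gg X i' p)) * (gg X i p' * (starRingEnd ℂ) (gg X i' p')) := by
          apply Finset.sum_congr rfl; intro p _
          apply Finset.sum_congr rfl; intro p' _
          rw [habs, M3, map_sum, Finset.sum_mul_sum]
          apply Finset.sum_congr rfl; intro i _
          apply Finset.sum_congr rfl; intro i' _
          rw [map_mul]; ring
      _ = ∑ i : Fin n, ∑ i' : Fin n, ∑ p ∈ T1 s q, ∑ p' ∈ T1 s q,
            (gg X i p * (starRingEnd ℂ) (gg X i' p)) * (gg X i p' * (starRingEnd ℂ) (gg X i' p')) := by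
          rw [Finset.sum_congr rfl (fun p _ => Finset.sum_comm), Finset.sum_comm]
          apply Finset.sum_congr rfl; intro i _
          rw [Finset.sum_congr rfl (fun p _ => Finset.sum_comm), Finset.sum_comm]
      _ = ∑ i : Fin n, ∑ i' : Fin n, ((mm X i i' : ℝ) : ℂ)^2 := by
          apply Finset.sum_congr rfl; intro i _
          apply Finset.sum_congr rfl; intro i' _
          rw [← Finset.sum_mul_sum, ← M1, sq]
  exact_mod_cast hC

lemma mem_T1 {p : Fin s × Fin q} : p ∈ T1 s q ↔ p.2 ≠ 0 := by
  simp [T1]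

lemma fin_val_ne_zero {a : Fin q} (h : a ≠ 0) : (a : ℕ) ≠ 0 := by
  exact Fin.val_ne_zero_iff.mpr h

lemma vv_self {p : Fin s × Fin q} {k : Fin s} (h : k = p.1) (p' : Fin s × Fin q)
    (h2 : p'.1 = p.1) : vv p p' k = p.2 + p'.2 := by
  simp [vv, h, h2]

lemma vv_eval_fst {p p' : Fin s × Fin q} (h : p.1 ≠ p'.1) : vv p p' p.1 = p.2 := by
  simp [vv, h]

lemma vv_eval_snd {p p' : Fin s × Fin q} (h : p.1 ≠ p'.1) : vv p p' p'.1 = p'.2 := by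
  simp [vv, Ne.symm h]

lemma vv_eval_other {p p' : Fin s × Fin q} {k : Fin s} (h1 : k ≠ p.1) (h2 : k ≠ p'.1) :
    vv p p' k = 0 := by
  simp [vv, h1, h2]

/-- Diagonal part: for p ∈ T1, the sum over p' with same column equals n². -/
lemma M4a (hn : 0 < n) (X : Fin n → Fin s → Fin q) (hX : IsBalanced X) (p : Fin s × Fin q)
    (hp : p ∈ T1 s q) :
    ∑ p' ∈ (T1 s q).filter (fun p' => p'.1 = p.1), (‖contrast X (vv p p')‖)^2
      = (n : ℝ)^2 := by
  have hp2 : p.2 ≠ 0 := mem_T1.mp hp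
  have hmem0 : ((p.1, -p.2) : Fin s × Fin q) ∈ (T1 s q).filter (fun p' => p'.1 = p.1) := by
    rw [Finset.mem_filter, mem_T1]
    exact ⟨neg_ne_zero.mpr hp2, rfl⟩
  have hmain := Finset.sum_eq_single_of_mem
    (f := fun p' => (‖contrast X (vv p p')‖)^2) ((p.1, -p.2) : Fin s × Fin q)
    hmem0 ?_
  · rw [hmain]
    have : contrast X (vv p (p.1, -p.2)) = n := by
      apply contrast_zero
      intro k
      by_cases h : k = p.1
      · rw [vv_self h (p.1, -p.2) rfl]; simp
      · rw [vv_eval_other (p' := ((p.1, -p.2) : Fin s × Fin q)) h h]; simp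
    rw [this]
    simp [Complex.norm_natCast]
  · intro p' hp' hne
    rw [Finset.mem_filter] at hp'
    have hb : p'.2 ≠ 0 := mem_T1.mp hp'.1
    have hsum : p.2 + p'.2 ≠ 0 := by
      intro h
      apply hne
      have : p'.2 = -p.2 := by
        rw [add_comm, ← eq_neg_iff_add_eq_zero] at h
        exact h
      rw [Prod.ext_iff]; exact ⟨hp'.2, this⟩
    have : contrast X (vv p p') = 0 := by
      apply contrast_single (NeZero.ne q) X hX p.1
      · rw [vv_self rfl p' hp'.2]
        exact fin_val_ne_zero hsum
      · intro k hk
        rw [vv_eval_other hk (by rw [hp'.2]; exact hk)]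
        simp
    simp [this]

/-- Off-diagonal part is at most twice the weight-2 sum. -/
lemma M4b (X : Fin n → Fin s → Fin q)
    (U : Finset ((Fin s × Fin q) × (Fin s × Fin q)))
    (hU : U = ((T1 s q) ×ˢ (T1 s q)).filter (fun t => t.1.1 ≠ t.2.1)) :
    ∑ t ∈ U, (‖contrast X (vv t.1 t.2)‖)^2
      ≤ 2 * ∑ v ∈ univ.filter (fun v : Fin s → Fin q => wt v = 2),
          (‖contrast X v‖)^2 := by
  set F : (Fin s → Fin q) → ℝ := fun v => (‖contrast X v‖)^2 with hF
  set φ : ((Fin s × Fin q) × (Fin s × Fin q)) → (Fin s → Fin q) := fun t => vv t.1 t.2 with hφ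
  have hmem : ∀ t ∈ U, t.1.2 ≠ 0 ∧ t.2.2 ≠ 0 ∧ t.1.1 ≠ t.2.1 := by
    intro t ht
    rw [hU, Finset.mem_filter, Finset.mem_product] at ht
    exact ⟨mem_T1.mp ht.1.1, mem_T1.mp ht.1.2, ht.2⟩
  -- each image point has weight 2
  have himg : ∀ t ∈ U, wt (φ t) = 2 := by
    intro t ht
    obtain ⟨h1, h2, h3⟩ := hmem t ht
    have : (univ.filter fun j => ((φ t) j : ℕ) ≠ 0) = {t.1.1, t.2.1} := by
      ext k
      simp only [Finset.mem_filter, mem_univ, true_and, Finset.mem_insert, Finset.mem_singleton]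
      constructor
      · intro hk
        by_contra hc
        push_neg at hc
        rw [hφ] at hk
        simp only at hk
        rw [vv_eval_other hc.1 hc.2] at hk
        simp at hk
      · intro hk
        rcases hk with hk | hk
        · subst hk; rw [hφ]; simp only; rw [vv_eval_fst h3]
          exact fin_val_ne_zero h1
        · subst hk; rw [hφ]; simp only; rw [vv_eval_snd h3]
          exact fin_val_ne_zero h2
    rw [wt, this, Finset.card_pair h3]
  -- fibers have at most 2 elements
  have hfiber : ∀ u ∈ U.image φ, (U.filter (fun t => φ t = u)).card ≤ 2 := by
    intro u hu
    obtain ⟨t0, ht0U, ht0⟩ := Finset.mem_image.mp hu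
    obtain ⟨ha0, hb0, hj0⟩ := hmem t0 ht0U
    have hsub : U.filter (fun t => φ t = u) ⊆ {t0, (t0.2, t0.1)} := by
      intro t ht
      rw [Finset.mem_filter] at ht
      obtain ⟨htU, htu⟩ := ht
      obtain ⟨ha, hb, hj⟩ := hmem t htU
      have heq : vv t.1 t.2 = vv t0.1 t0.2 := by
        have := htu.trans ht0.symm
        simpa [hφ] using this
      -- evaluate
      have e1 : vv t0.1 t0.2 t.1.1 = t.1.2 := by rw [← heq]; exact vv_eval_fst hj
      have e2 : vv t0.1 t0.2 t.2.1 = t.2.2 := by rw [← heq]; exact vv_eval_snd hj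
      have hin1 : t.1.1 = t0.1.1 ∨ t.1.1 = t0.2.1 := by
        by_contra hc
        push_neg at hc
        rw [vv_eval_other hc.1 hc.2] at e1
        exact ha e1.symm
      have hin2 : t.2.1 = t0.1.1 ∨ t.2.1 = t0.2.1 := by
        by_contra hc
        push_neg at hc
        rw [vv_eval_other hc.1 hc.2] at e2
        exact hb e2.symm
      simp only [Finset.mem_insert, Finset.mem_singleton]
      rcases hin1 with h1 | h1 <;> rcases hin2 with h2 | h2
      · exact absurd (h1.trans h2.symm) hj
      · left
        rw [h1] at e1; rw [vv_eval_fst hj0] at e1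
        rw [h2] at e2; rw [vv_eval_snd hj0] at e2
        rw [Prod.ext_iff, Prod.ext_iff, Prod.ext_iff]
        exact ⟨⟨h1, e1.symm⟩, ⟨h2, e2.symm⟩⟩
      · right
        rw [h1] at e1; rw [vv_eval_snd hj0] at e1
        rw [h2] at e2; rw [vv_eval_fst hj0] at e2
        rw [Prod.ext_iff, Prod.ext_iff, Prod.ext_iff]
        exact ⟨⟨h1, e1.symm⟩, ⟨h2, e2.symm⟩⟩
      · exact absurd (h1.trans h2.symm) hj
    calc (U.filter (fun t => φ t = u)).card ≤ ({t0, (t0.2, t0.1)} : Finset _).card :=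
          Finset.card_le_card hsub
      _ ≤ 2 := Finset.card_insert_le _ _ |>.trans (by simp)
  have hFnn : ∀ v, 0 ≤ F v := fun v => sq_nonneg _
  calc ∑ t ∈ U, F (φ t) = ∑ u ∈ U.image φ, (U.filter (fun t => φ t = u)).card • F u :=
        Finset.sum_comp F φ
    _ ≤ ∑ u ∈ U.image φ, 2 * F u := by
        apply Finset.sum_le_sum
        intro u hu
        rw [nsmul_eq_mul]
        exact mul_le_mul_of_nonneg_right (by exact_mod_cast hfiber u hu) (hFnn u)
    _ ≤ ∑ u ∈ univ.filter (fun v : Fin s → Fin q => wt v = 2), 2 * F u := by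
        apply Finset.sum_le_sum_of_subset_of_nonneg
        · intro u hu
          obtain ⟨t, htU, ht⟩ := Finset.mem_image.mp hu
          rw [Finset.mem_filter]
          exact ⟨mem_univ _, ht ▸ himg t htU⟩
        · intro u _ _
          positivity
    _ = 2 * ∑ v ∈ univ.filter (fun v : Fin s → Fin q => wt v = 2), F v := by
        rw [Finset.mul_sum]

lemma R1 (X : Fin n → Fin s → Fin q) (i : Fin n) : mm X i i = (s : ℝ) * ((q : ℝ) - 1) := by
  rw [mm]
  rw [Finset.sum_congr rfl (fun j _ => by simp : ∀ j ∈ univ, ((q : ℝ) * (if X i j = X i j then 1 else 0) - 1) = (q : ℝ) - 1)]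
  simp [mul_comm]; ring

lemma R2 (X : Fin n → Fin s → Fin q) (hX : IsBalanced X) :
    ∑ i : Fin n, ∑ i' : Fin n, mm X i i' = 0 := by
  simp only [mm]
  rw [Finset.sum_congr rfl (fun i _ => Finset.sum_comm), Finset.sum_comm]
  apply Finset.sum_eq_zero
  intro j _
  -- goal: ∑ i', ∑ i, (q * ite (X i j = X i' j) 1 0 - 1) = 0  (order after swaps?)
  have hcount : ∀ i : Fin n, ∑ i' : Fin n, (if X i j = X i' j then (1:ℝ) else 0) = ((n / q : ℕ) : ℝ) := by
    intro i
    rw [Finset.sum_boole, ← hX.2 j (X i j)]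
    have : (univ.filter fun i' => X i j = X i' j) = (univ.filter fun i' => X i' j = X i j) := by
      ext i'; simp [eq_comm]
    rw [this]
  have hin : ∀ i : Fin n, ∑ i' : Fin n, ((q:ℝ) * (if X i j = X i' j then 1 else 0) - 1) = 0 := by
    intro i
    rw [Finset.sum_sub_distrib, ← Finset.mul_sum, hcount i]
    have : (q : ℝ) * ((n / q : ℕ) : ℝ) = n := by
      have h := Nat.mul_div_cancel' hX.1
      exact_mod_cast congrArg (fun x : ℕ => (x : ℝ)) h
    simp [this, Finset.card_univ]
  exact Finset.sum_eq_zero (fun i _ => hin i)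
end Main

/-- For a balanced design with integer-valued PC-mean (q(n−1) ∣ s(n−q)),
A₂(X) ≥ s(q−1)(qs − s − n + 1) / (2(n−1)). -/
theorem wlp_two_lower_bound (n s q : ℕ) (hq : 2 ≤ q) (hn : 2 ≤ n) (hs : 2 ≤ s)
    (X : Fin n → Fin s → Fin q) (hX : IsBalanced X)
    (hdvd : q * (n - 1) ∣ s * (n - q)) :
    wlp X 2 ≥ (s : ℝ) * ((q : ℝ) - 1) * ((q : ℝ) * s - s - n + 1) /
      (2 * ((n : ℝ) - 1)) := by
  haveI : NeZero q := ⟨by omega⟩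
  set F : (Fin s → Fin q) → ℝ := fun v => (‖contrast X v‖)^2 with hF
  set S2 : ℝ := ∑ v ∈ univ.filter (fun v : Fin s → Fin q => wt v = 2), F v with hS2
  set A : ℝ := (s : ℝ) * ((q : ℝ) - 1) with hA
  set Q : ℝ := ∑ t ∈ (univ : Finset (Fin n)).offDiag, (mm X t.1 t.2)^2 with hQ
  have hn0 : (0:ℝ) < n := by positivity
  have hn2 : (2:ℝ) ≤ n := by exact_mod_cast hn
  have hcast : ((s * (q-1) : ℕ) : ℝ) = A := by
    rw [hA]
    push_cast [Nat.cast_sub (by omega : 1 ≤ q)]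
    ring
  -- Step 1: full sum of mm² bounded above
  have hfull : ∑ i : Fin n, ∑ i' : Fin n, (mm X i i')^2 ≤ A * (n:ℝ)^2 + 2 * S2 := by
    rw [← M2 X]
    have step : ∀ p ∈ T1 s q, ∑ p' ∈ T1 s q, F (vv p p') =
        (n:ℝ)^2 + ∑ p' ∈ (T1 s q).filter (fun p' => ¬ p'.1 = p.1), F (vv p p') := by
      intro p hp
      rw [← Finset.sum_filter_add_sum_filter_not (T1 s q) (fun p' => p'.1 = p.1)]
      congr 1
      exact M4a (by omega) X hX p hp
    calc ∑ p ∈ T1 s q, ∑ p' ∈ T1 s q, F (vv p p')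
        = ∑ p ∈ T1 s q, ((n:ℝ)^2 + ∑ p' ∈ (T1 s q).filter (fun p' => ¬ p'.1 = p.1), F (vv p p')) :=
          Finset.sum_congr rfl step
      _ = (T1 s q).card • (n:ℝ)^2
            + ∑ p ∈ T1 s q, ∑ p' ∈ (T1 s q).filter (fun p' => ¬ p'.1 = p.1), F (vv p p') := by
          rw [Finset.sum_add_distrib, Finset.sum_const]
      _ ≤ A * (n:ℝ)^2 + 2 * S2 := by
          have hcard : ((T1 s q).card : ℝ) • ((n:ℝ)^2) = A * (n:ℝ)^2 := by
            rw [T1_card, smul_eq_mul, hcast]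
          have hoff : ∑ p ∈ T1 s q, ∑ p' ∈ (T1 s q).filter (fun p' => ¬ p'.1 = p.1), F (vv p p')
              ≤ 2 * S2 := by
            have hrw : ∑ p ∈ T1 s q, ∑ p' ∈ (T1 s q).filter (fun p' => ¬ p'.1 = p.1), F (vv p p')
                = ∑ t ∈ ((T1 s q) ×ˢ (T1 s q)).filter (fun t => t.1.1 ≠ t.2.1), F (vv t.1 t.2) := by
              calc ∑ p ∈ T1 s q, ∑ p' ∈ (T1 s q).filter (fun p' => ¬ p'.1 = p.1), F (vv p p')
                  = ∑ p ∈ T1 s q, ∑ p' ∈ T1 s q, if ¬ p'.1 = p.1 then F (vv p p') else 0 :=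
                    Finset.sum_congr rfl (fun p _ => Finset.sum_filter _ _)
                _ = ∑ p ∈ T1 s q, ∑ p' ∈ T1 s q, if p.1 ≠ p'.1 then F (vv p p') else 0 := by
                    apply Finset.sum_congr rfl; intro p _
                    apply Finset.sum_congr rfl; intro p' _
                    exact if_congr (by simp [ne_comm, eq_comm]) rfl rfl
                _ = ∑ t ∈ (T1 s q) ×ˢ (T1 s q), if t.1.1 ≠ t.2.1 then F (vv t.1 t.2) else 0 :=
                    (Finset.sum_product' (T1 s q) (T1 s q) (fun p p' => if p.1 ≠ p'.1 then F (vv p p') else 0)).symm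
                _ = _ := (Finset.sum_filter _ _).symm
            rw [hrw, hS2]
            exact M4b X _ rfl
          rw [← Nat.cast_smul_eq_nsmul ℝ, hcard]
          linarith
  -- Step 2: split into diagonal and off-diagonal
  have hdiagsum : ∑ i : Fin n, (mm X i i)^2 = n * A^2 := by
    rw [Finset.sum_congr rfl (fun i _ => by rw [R1 X i, ← hA])]
    simp [Finset.card_univ, mul_comm]
  have hsq_split : ∑ i : Fin n, ∑ i' : Fin n, (mm X i i')^2
      = ∑ i : Fin n, (mm X i i)^2 + Q := by
    rw [hQ, ← Finset.sum_product' univ univ (fun i i' => (mm X i i')^2),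
      ← Finset.diag_union_offDiag (univ : Finset (Fin n)),
      Finset.sum_union (Finset.disjoint_diag_offDiag _), Finset.sum_diag]
  have hmm_diag : ∑ i : Fin n, mm X i i = n * A := by
    rw [Finset.sum_congr rfl (fun i _ => by rw [R1 X i, ← hA])]
    simp [Finset.card_univ, mul_comm]
  have hP : ∑ t ∈ (univ : Finset (Fin n)).offDiag, mm X t.1 t.2 = -(n * A) := by
    have h0 := R2 X hX
    rw [← Finset.sum_product' univ univ (fun i i' => mm X i i'),
      ← Finset.diag_union_offDiag (univ : Finset (Fin n)),
      Finset.sum_union (Finset.disjoint_diag_offDiag _), Finset.sum_diag] at h0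
    rw [hmm_diag] at h0
    linarith
  -- Step 3: Cauchy-Schwarz on the off-diagonal
  have hCS := sq_sum_le_card_mul_sum_sq
    (s := (univ : Finset (Fin n)).offDiag) (f := fun t => mm X t.1 t.2)
  rw [hP, ← hQ, Finset.offDiag_card, Finset.card_univ, Fintype.card_fin] at hCS
  have hle : n ≤ n * n := Nat.le_mul_of_pos_left n (show 0 < n by omega)
  have hcard2 : ((n * n - n : ℕ) : ℝ) = (n:ℝ)^2 - n := by
    push_cast [Nat.cast_sub hle]
    ring
  rw [hcard2] at hCS
  -- combine
  have fact1 : (n:ℝ) * A^2 + Q ≤ A * (n:ℝ)^2 + 2 * S2 := by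
    rw [hsq_split, hdiagsum] at hfull
    linarith
  have fact2' : (n:ℝ) * A^2 ≤ ((n:ℝ) - 1) * Q := by
    nlinarith [hCS, hn0, sq_nonneg A]
  have hwlp : wlp X 2 = S2 / (n:ℝ)^2 := by
    simp only [wlp, hS2, hF]
  rw [ge_iff_le, hwlp]
  have hgoal_eq : (s:ℝ)*((q:ℝ)-1)*((q:ℝ)*s - s - n + 1) = A * (A - ((n:ℝ)-1)) := by
    rw [hA]; ring
  rw [hgoal_eq, div_le_div_iff₀ (by linarith) (by positivity)]
  have fact1' := mul_le_mul_of_nonneg_left fact1 (by linarith : (0:ℝ) ≤ (n:ℝ) - 1)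
  nlinarith [fact1', fact2']
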